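/- Let X be a geodesic metric space, p, q ∈ X, and γ : [0,T] → X a continuous (λ, ε)-quasi-geodesic. Let γ(t) and γ(t') be points on γ closest to p and q respectively, with t ≤ t'. Let α be a geodesic from p to γ(t) and β a geodesic from γ(t') to q. If |t − t'| ≥ 3λ(d(p, γ(t)) + d(q, γ(t'))), then the concatenation α · γ|[t,t'] · β is a continuous (3λ, ε)-quasi-geodesic. -/

import Mathlib

open Set Metric

universe u

/-- `γ` restricted to `I` is a `(lam, eps)`-quasi-geodesic. -/
def IsQuasiGeodesicOn {X : Type*} [MetricSpace X] (γ : ℝ → X) (I : Set ℝ)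
    (lam eps : ℝ) : Prop :=
  ∀ s ∈ I, ∀ t ∈ I,
    (1 / lam) * |s - t| - eps ≤ dist (γ s) (γ t) ∧ dist (γ s) (γ t) ≤ lam * |s - t| + eps

/-- `γ` restricted to `I` is a (unit-speed) geodesic. -/
def IsGeodesicOn {X : Type*} [MetricSpace X] (γ : ℝ → X) (I : Set ℝ) : Prop :=
  ∀ s ∈ I, ∀ t ∈ I, dist (γ s) (γ t) = |s - t|

/-- A metric space is geodesic if any two points are joined by a geodesic. -/
def GeodesicSpace (X : Type*) [MetricSpace X] : Prop :=
  ∀ x y : X, ∃ γ : ℝ → X, γ 0 = x ∧ γ (dist x y) = y ∧ IsGeodesicOn γ (Icc 0 (dist x y))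

/-- A Morse gauge: an increasing map `ℝ≥1 × ℝ≥0 → ℝ≥0`, continuous in the second argument. -/
def IsMorseGauge (M : ℝ → ℝ → ℝ) : Prop :=
  (∀ l e, 1 ≤ l → 0 ≤ e → 0 ≤ M l e) ∧
  (∀ l l' e e', 1 ≤ l → 0 ≤ e → l ≤ l' → e ≤ e' → M l e ≤ M l' e') ∧
  (∀ l, 1 ≤ l → ContinuousOn (fun e => M l e) (Ici 0))

/-- Pointwise partial order on Morse gauges (on the domain `ℝ≥1 × ℝ≥0`). -/
def GaugeLE (M N : ℝ → ℝ → ℝ) : Prop :=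
  ∀ l e, 1 ≤ l → 0 ≤ e → M l e ≤ N l e

/-- `γ` restricted to `I` is `M`-Morse: every continuous `(lam, eps)`-quasi-geodesic with
endpoints on `γ` lies in the closed `M lam eps`-neighbourhood of `γ`. -/
def IsMorseWith {X : Type*} [MetricSpace X] (M : ℝ → ℝ → ℝ) (γ : ℝ → X) (I : Set ℝ) : Prop :=
  ∀ lam eps : ℝ, 1 ≤ lam → 0 ≤ eps →
    ∀ (η : ℝ → X) (a b : ℝ), a ≤ b →
      ContinuousOn η (Icc a b) → IsQuasiGeodesicOn η (Icc a b) lam eps →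
      η a ∈ γ '' I → η b ∈ γ '' I →
      ∀ t ∈ Icc a b, ∃ s ∈ I, dist (η t) (γ s) ≤ M lam eps

/-- The constant `δ_M` associated to a Morse gauge `M`. -/
def morseDelta (M : ℝ → ℝ → ℝ) : ℝ :=
  max (4 * M 1 (2 * M 5 0) + 2 * M 5 0) (8 * M 3 0)


section Helpers

private lemma contOn_union_closed {X Y : Type*} [TopologicalSpace X] [TopologicalSpace Y]
    {s t : Set X} {f : X → Y} (hs : IsClosed s) (ht : IsClosed t)
    (hfs : ContinuousOn f s) (hft : ContinuousOn f t) : ContinuousOn f (s ∪ t) := by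
  intro x hx
  apply ContinuousWithinAt.union
  · by_cases h : x ∈ s
    · exact hfs x h
    · exact continuousWithinAt_of_notMem_closure (by rwa [hs.closure_eq])
  · by_cases h : x ∈ t
    · exact hft x h
    · exact continuousWithinAt_of_notMem_closure (by rwa [ht.closure_eq])

private lemma key_lower (lam eps A B D : ℝ) (hlam : 1 ≤ lam) (heps : 0 ≤ eps)
    (hA : 0 ≤ A) (hB : 0 ≤ B) (h1 : A ≤ D) (h2 : (1/lam)*B - eps - A ≤ D) :
    (1/(3*lam))*(A+B) - eps ≤ D := by
  have hl : (0:ℝ) < lam := by linarith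
  have hl3 : (0:ℝ) < 3*lam := by linarith
  rcases le_or_gt B (2*lam*A) with h | h
  · have key : (1/(3*lam))*(A+B) ≤ A := by
      rw [div_mul_eq_mul_div, div_le_iff₀ hl3]
      nlinarith
    linarith
  · have key : (1/(3*lam))*(A+B) ≤ (1/lam)*B - A := by
      rw [div_mul_eq_mul_div, div_le_iff₀ hl3]
      have expand : ((1/lam)*B - A)*(3*lam) = 3*B - 3*lam*A := by
        field_simp
      rw [expand]
      nlinarith
    linarith

private lemma key_lower2 (lam eps a Δ D : ℝ) (hlam : 1 ≤ lam) (heps : 0 ≤ eps)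
    (ha : 0 ≤ a) (hΔ : 0 ≤ Δ) (hfar : 3*lam*a ≤ Δ)
    (h2 : (1/lam)*Δ - eps - a ≤ D) :
    (1/(3*lam))*(a+Δ) - eps ≤ D := by
  have hl : (0:ℝ) < lam := by linarith
  have hl3 : (0:ℝ) < 3*lam := by linarith
  have key : (1/(3*lam))*(a+Δ) ≤ (1/lam)*Δ - a := by
    rw [div_mul_eq_mul_div, div_le_iff₀ hl3]
    have expand : ((1/lam)*Δ - a)*(3*lam) = 3*Δ - 3*lam*a := by
      field_simp
    rw [expand]
    nlinarith
  linarith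

private lemma qg_mid (lam eps r D : ℝ) (hlam : 1 ≤ lam) (heps : 0 ≤ eps) (hr : 0 ≤ r)
    (hl : (1/lam)*r - eps ≤ D) (hu : D ≤ lam*r + eps) :
    (1/(3*lam))*r - eps ≤ D ∧ D ≤ 3*lam*r + eps := by
  have hl0 : (0:ℝ) < lam := by linarith
  constructor
  · have h1 : (1/(3*lam)) ≤ 1/lam := by
      apply one_div_le_one_div_of_le hl0; linarith
    have := mul_le_mul_of_nonneg_right h1 hr
    linarith
  · nlinarith

private lemma qg_geo (lam eps r : ℝ) (hlam : 1 ≤ lam) (heps : 0 ≤ eps) (hr : 0 ≤ r) :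
    (1/(3*lam))*r - eps ≤ r ∧ r ≤ 3*lam*r + eps := by
  have hl0 : (0:ℝ) < lam := by linarith
  refine qg_mid lam eps r r hlam heps hr ?_ ?_
  · have h1 : (1/lam) ≤ 1 := by rw [div_le_one hl0]; linarith
    have := mul_le_mul_of_nonneg_right h1 hr
    linarith
  · nlinarith

end Helpers

set_option maxHeartbeats 1600000 in
/-- If `γ : [0,T] → X` is a continuous `(lam, eps)`-quasi-geodesic, `γ t` and
`γ t'` are closest points on `γ` to `p` and `q` respectively with `t ≤ t'`, `α` is a geodesic
from `p` to `γ t`, `β` a geodesic from `γ t'` to `q`, and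
`|t - t'| ≥ 3 lam (d(p, γ t) + d(q, γ t'))`, then `α · γ|[t,t'] · β` is a continuous
`(3 lam, eps)`-quasi-geodesic. -/
theorem statement1 {X : Type u} [MetricSpace X] (hX : GeodesicSpace X)
    (p q : X) (T lam eps t t' : ℝ) (γ : ℝ → X)
    (hT : 0 ≤ T) (hlam : 1 ≤ lam) (heps : 0 ≤ eps)
    (hcont : ContinuousOn γ (Icc 0 T))
    (hqg : IsQuasiGeodesicOn γ (Icc 0 T) lam eps)
    (ht : t ∈ Icc 0 T) (ht' : t' ∈ Icc 0 T) (htt' : t ≤ t')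
    (hclosest : ∀ s ∈ Icc 0 T, dist p (γ t) ≤ dist p (γ s))
    (hclosest' : ∀ s ∈ Icc 0 T, dist q (γ t') ≤ dist q (γ s))
    (hfar : 3 * lam * (dist p (γ t) + dist q (γ t')) ≤ |t - t'|)
    (α : ℝ → X) (hα0 : α 0 = p) (hα1 : α (dist p (γ t)) = γ t)
    (hαgeo : IsGeodesicOn α (Icc 0 (dist p (γ t))))
    (β : ℝ → X) (hβ0 : β 0 = γ t') (hβ1 : β (dist (γ t') q) = q)
    (hβgeo : IsGeodesicOn β (Icc 0 (dist (γ t') q))) :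
    ContinuousOn
        (fun u => if u ≤ dist p (γ t) then α u
          else if u ≤ dist p (γ t) + (t' - t) then γ (t + (u - dist p (γ t)))
          else β (u - (dist p (γ t) + (t' - t))))
        (Icc 0 (dist p (γ t) + (t' - t) + dist (γ t') q)) ∧
      IsQuasiGeodesicOn
        (fun u => if u ≤ dist p (γ t) then α u
          else if u ≤ dist p (γ t) + (t' - t) then γ (t + (u - dist p (γ t)))
          else β (u - (dist p (γ t) + (t' - t))))
        (Icc 0 (dist p (γ t) + (t' - t) + dist (γ t') q)) (3 * lam) eps := by
  obtain ⟨ht0, htT⟩ := ht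
  obtain ⟨ht'0, ht'T⟩ := ht'
  set d1 := dist p (γ t) with hd1def
  set d2 := dist (γ t') q with hd2def
  have hd1 : 0 ≤ d1 := dist_nonneg
  have hd2 : 0 ≤ d2 := dist_nonneg
  have hΔ : 0 ≤ t' - t := by linarith
  have hlam0 : (0:ℝ) < lam := by linarith
  set η := fun u => if u ≤ d1 then α u
      else if u ≤ d1 + (t' - t) then γ (t + (u - d1))
      else β (u - (d1 + (t' - t))) with hηdef
  set L := d1 + (t' - t) + d2 with hLdef
  have hfar' : 3 * lam * (d1 + d2) ≤ t' - t := by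
    have habs : |t - t'| = t' - t := by
      rw [abs_sub_comm]; exact abs_of_nonneg hΔ
    rw [habs] at hfar
    rw [dist_comm q (γ t')] at hfar
    rw [← hd2def] at hfar
    exact hfar
  -- memberships
  have hmemt : ∀ u, d1 ≤ u → u ≤ d1 + (t' - t) → t + (u - d1) ∈ Icc 0 T := by
    intro u h1 h2
    constructor <;> [linarith; linarith]
  -- evaluation lemmas
  have ev1 : ∀ u, u ≤ d1 → η u = α u := by
    intro u h; simp only [hηdef]; rw [if_pos h]
  have ev2 : ∀ u, d1 ≤ u → u ≤ d1 + (t' - t) → η u = γ (t + (u - d1)) := by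
    intro u h1 h2
    by_cases h : u ≤ d1
    · have hu : u = d1 := le_antisymm h h1
      simp only [hηdef]
      rw [if_pos h, hu, hα1, sub_self, add_zero]
    · simp only [hηdef]; rw [if_neg h, if_pos h2]
  have ev3 : ∀ u, d1 + (t' - t) ≤ u → η u = β (u - (d1 + (t' - t))) := by
    intro u h1
    by_cases h : u ≤ d1
    · have he : t' = t := by
        have : t' - t ≤ 0 := by linarith
        linarith
      have hu : u = d1 := le_antisymm h (by linarith)
      simp only [hηdef]
      rw [if_pos h, hu, hα1]
      have e0 : d1 - (d1 + (t' - t)) = 0 := by rw [he]; ring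
      rw [e0, hβ0, he]
    · by_cases h2 : u ≤ d1 + (t' - t)
      · have hu : u = d1 + (t' - t) := le_antisymm h2 h1
        simp only [hηdef]
        rw [if_neg h, if_pos h2, hu]
        have e1 : t + (d1 + (t' - t) - d1) = t' := by ring
        have e2 : d1 + (t' - t) - (d1 + (t' - t)) = 0 := by ring
        rw [e1, e2, hβ0]
      · simp only [hηdef]; rw [if_neg h, if_neg h2]
  -- geodesic distance facts
  have hpα : ∀ s ∈ Icc (0:ℝ) d1, dist p (α s) = s := by
    intro s hs
    rw [← hα0, hαgeo 0 ⟨le_rfl, hd1⟩ s hs, zero_sub, abs_neg, abs_of_nonneg hs.1]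
  have hαγt : ∀ s ∈ Icc (0:ℝ) d1, dist (α s) (γ t) = d1 - s := by
    intro s hs
    rw [← hα1, hαgeo s hs d1 ⟨hd1, le_rfl⟩, abs_sub_comm, abs_of_nonneg (by linarith [hs.2])]
  have hβγ : ∀ v ∈ Icc (0:ℝ) d2, dist (γ t') (β v) = v := by
    intro v hv
    rw [← hβ0, hβgeo 0 ⟨le_rfl, hd2⟩ v hv, zero_sub, abs_neg, abs_of_nonneg hv.1]
  have hqβ : ∀ v ∈ Icc (0:ℝ) d2, dist q (β v) = d2 - v := by
    intro v hv
    rw [← hβ1, hβgeo d2 ⟨hd2, le_rfl⟩ v hv, abs_of_nonneg (by linarith [hv.2])]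
  have htmem : t ∈ Icc 0 T := ⟨ht0, htT⟩
  have ht'mem : t' ∈ Icc 0 T := ⟨ht'0, ht'T⟩
  -- γ-γ bounds on [t,t']
  have hγγu : ∀ a b : ℝ, a ∈ Icc 0 T → b ∈ Icc 0 T → a ≤ b →
      dist (γ a) (γ b) ≤ lam * (b - a) + eps := by
    intro a b ha hb hab
    have := (hqg a ha b hb).2
    rwa [abs_sub_comm, abs_of_nonneg (by linarith)] at this
  have hγγl : ∀ a b : ℝ, a ∈ Icc 0 T → b ∈ Icc 0 T → a ≤ b →
      (1/lam) * (b - a) - eps ≤ dist (γ a) (γ b) := by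
    intro a b ha hb hab
    have := (hqg a ha b hb).1
    rwa [abs_sub_comm, abs_of_nonneg (by linarith)] at this
  -- main two-sided bound assuming s ≤ u
  have main : ∀ s ∈ Icc (0:ℝ) L, ∀ u ∈ Icc (0:ℝ) L, s ≤ u →
      1 / (3*lam) * |s - u| - eps ≤ dist (η s) (η u) ∧
        dist (η s) (η u) ≤ 3*lam * |s - u| + eps := by
    intro s hs u hu hsu
    obtain ⟨hs0, hsL⟩ := hs
    obtain ⟨hu0, huL⟩ := hu
    have habs2 : |s - u| = u - s := by
      rw [abs_sub_comm]; exact abs_of_nonneg (by linarith)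
    rw [habs2]
    rcases le_or_gt u d1 with hu1 | hu1
    · -- both on α
      have hs1 : s ≤ d1 := le_trans hsu hu1
      rw [ev1 s hs1, ev1 u hu1, hαgeo s ⟨hs0, hs1⟩ u ⟨hu0, hu1⟩, habs2]
      exact qg_geo lam eps (u - s) hlam heps (by linarith)
    · rcases le_or_gt u (d1 + (t' - t)) with hu2 | hu2
      · -- u on γ part
        have hw : t + (u - d1) ∈ Icc 0 T := hmemt u hu1.le hu2
        rcases le_or_gt s d1 with hs1 | hs1
        · -- α–γ
          rw [ev1 s hs1, ev2 u hu1.le hu2]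
          have hsIcc : s ∈ Icc (0:ℝ) d1 := ⟨hs0, hs1⟩
          have hγu : dist (γ t) (γ (t + (u - d1))) ≤ lam * (u - d1) + eps := by
            have := hγγu t (t + (u - d1)) htmem hw (by linarith)
            simpa using this
          have hγl : (1/lam) * (u - d1) - eps ≤ dist (γ t) (γ (t + (u - d1))) := by
            have := hγγl t (t + (u - d1)) htmem hw (by linarith)
            simpa using this
          constructor
          · have hclos := hclosest (t + (u - d1)) hw
            have tri1 := dist_triangle p (α s) (γ (t + (u - d1)))
            rw [hpα s hsIcc] at tri1
            have h1 : d1 - s ≤ dist (α s) (γ (t + (u - d1))) := by linarith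
            have tri2 := dist_triangle (γ t) (α s) (γ (t + (u - d1)))
            rw [dist_comm (γ t) (α s), hαγt s hsIcc] at tri2
            have h2 : (1/lam) * (u - d1) - eps - (d1 - s) ≤
                dist (α s) (γ (t + (u - d1))) := by linarith
            have := key_lower lam eps (d1 - s) (u - d1)
              (dist (α s) (γ (t + (u - d1)))) hlam heps (by linarith) (by linarith) h1 h2
            have e : (d1 - s) + (u - d1) = u - s := by ring
            rwa [e] at this
          · have tri := dist_triangle (α s) (γ t) (γ (t + (u - d1)))
            rw [hαγt s hsIcc] at tri
            nlinarith [mul_nonneg (show (0:ℝ) ≤ 3*lam - 1 by linarith)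
                (show (0:ℝ) ≤ d1 - s by linarith),
              mul_nonneg (show (0:ℝ) ≤ 2*lam by linarith)
                (show (0:ℝ) ≤ u - d1 by linarith)]
        · -- γ–γ
          have hws : t + (s - d1) ∈ Icc 0 T := hmemt s hs1.le (by linarith)
          rw [ev2 s hs1.le (by linarith), ev2 u hu1.le hu2]
          have hl := hγγl (t + (s - d1)) (t + (u - d1)) hws hw (by linarith)
          have hu' := hγγu (t + (s - d1)) (t + (u - d1)) hws hw (by linarith)
          have e : t + (u - d1) - (t + (s - d1)) = u - s := by ring
          rw [e] at hl hu'
          exact qg_mid lam eps (u - s) _ hlam heps (by linarith) hl hu'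
      · -- u on β part
        have hv : u - (d1 + (t' - t)) ∈ Icc (0:ℝ) d2 :=
          ⟨by linarith, by linarith⟩
        rw [ev3 u hu2.le]
        rcases le_or_gt s d1 with hs1 | hs1
        · -- α–β
          rw [ev1 s hs1]
          have hsIcc : s ∈ Icc (0:ℝ) d1 := ⟨hs0, hs1⟩
          have hγu : dist (γ t) (γ t') ≤ lam * (t' - t) + eps :=
            hγγu t t' htmem ht'mem htt'
          have hγl : (1/lam) * (t' - t) - eps ≤ dist (γ t) (γ t') :=
            hγγl t t' htmem ht'mem htt'
          have tri1 := dist_triangle (α s) (γ t') (β (u - (d1 + (t' - t))))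
          have tri2 := dist_triangle (α s) (γ t) (γ t')
          have tri3 := dist_triangle (γ t) (α s) (γ t')
          have tri4 := dist_triangle (γ t) (γ t') (β (u - (d1 + (t' - t))))
          have tri5 := dist_triangle (γ t) (α s) (β (u - (d1 + (t' - t))))
          rw [hαγt s hsIcc] at tri2
          rw [dist_comm (γ t) (α s), hαγt s hsIcc] at tri3 tri5
          rw [hβγ _ hv] at tri1 tri4
          have tri6 := dist_triangle (γ t) (β (u - (d1 + (t' - t)))) (γ t')
          rw [dist_comm (β (u - (d1 + (t' - t)))) (γ t'), hβγ _ hv] at tri6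
          constructor
          · -- lower bound via key_lower2
            have h2 : (1/lam) * (t' - t) - eps - ((d1 - s) + (u - (d1 + (t' - t)))) ≤
                dist (α s) (β (u - (d1 + (t' - t)))) := by linarith
            have hfar2 : 3*lam*((d1 - s) + (u - (d1 + (t' - t)))) ≤ t' - t := by
              nlinarith [hv.2, hs0]
            have := key_lower2 lam eps ((d1 - s) + (u - (d1 + (t' - t)))) (t' - t)
              (dist (α s) (β (u - (d1 + (t' - t))))) hlam heps
              (by nlinarith [hv.1]) hΔ hfar2 h2
            have e : (d1 - s) + (u - (d1 + (t' - t))) + (t' - t) = u - s := by ring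
            rwa [e] at this
          · -- upper bound
            have hd : dist (α s) (β (u - (d1 + (t' - t)))) ≤
                (d1 - s) + (lam * (t' - t) + eps) + (u - (d1 + (t' - t))) := by
              calc dist (α s) (β (u - (d1 + (t' - t))))
                  ≤ dist (α s) (γ t') + (u - (d1 + (t' - t))) := tri1
                _ ≤ (d1 - s) + dist (γ t) (γ t') + (u - (d1 + (t' - t))) := by linarith
                _ ≤ (d1 - s) + (lam * (t' - t) + eps) + (u - (d1 + (t' - t))) := by linarith
            nlinarith [mul_nonneg (show (0:ℝ) ≤ 3*lam - 1 by linarith)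
                (show (0:ℝ) ≤ d1 - s by linarith),
              mul_nonneg (show (0:ℝ) ≤ 2*lam by linarith) hΔ,
              mul_nonneg (show (0:ℝ) ≤ 3*lam - 1 by linarith) hv.1]
        · rcases le_or_gt s (d1 + (t' - t)) with hs2 | hs2
          · -- γ–β
            rw [ev2 s hs1.le hs2]
            have hws : t + (s - d1) ∈ Icc 0 T := hmemt s hs1.le hs2
            have hγu : dist (γ (t + (s - d1))) (γ t') ≤ lam * (t' - (t + (s - d1))) + eps :=
              hγγu (t + (s - d1)) t' hws ht'mem (by linarith)
            have hγl : (1/lam) * (t' - (t + (s - d1))) - eps ≤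
                dist (γ (t + (s - d1))) (γ t') :=
              hγγl (t + (s - d1)) t' hws ht'mem (by linarith)
            have tri1 := dist_triangle q (β (u - (d1 + (t' - t)))) (γ (t + (s - d1)))
            rw [hqβ _ hv] at tri1
            have tri2 := dist_triangle (γ (t + (s - d1))) (β (u - (d1 + (t' - t)))) (γ t')
            rw [dist_comm (β (u - (d1 + (t' - t)))) (γ t'), hβγ _ hv] at tri2
            constructor
            · have hclos := hclosest' (t + (s - d1)) hws
              rw [dist_comm q (γ t'), ← hd2def] at hclos
              have h1 : u - (d1 + (t' - t)) ≤
                  dist (γ (t + (s - d1))) (β (u - (d1 + (t' - t)))) := by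
                rw [dist_comm (β (u - (d1 + (t' - t)))) (γ (t + (s - d1)))] at tri1
                linarith
              have h2 : (1/lam) * (t' - (t + (s - d1))) - eps - (u - (d1 + (t' - t))) ≤
                  dist (γ (t + (s - d1))) (β (u - (d1 + (t' - t)))) := by linarith
              have := key_lower lam eps (u - (d1 + (t' - t))) (t' - (t + (s - d1)))
                (dist (γ (t + (s - d1))) (β (u - (d1 + (t' - t))))) hlam heps
                hv.1 (by linarith) h1 h2
              have e : u - (d1 + (t' - t)) + (t' - (t + (s - d1))) = u - s := by ring
              rwa [e] at this
            · have tri3 := dist_triangle (γ (t + (s - d1))) (γ t')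
                (β (u - (d1 + (t' - t))))
              rw [hβγ _ hv] at tri3
              nlinarith [mul_nonneg (show (0:ℝ) ≤ 2*lam by linarith)
                  (show (0:ℝ) ≤ t' - (t + (s - d1)) by linarith),
                mul_nonneg (show (0:ℝ) ≤ 3*lam - 1 by linarith) hv.1]
          · -- β–β
            rw [ev3 s hs2.le]
            have hvs : s - (d1 + (t' - t)) ∈ Icc (0:ℝ) d2 := ⟨by linarith, by linarith⟩
            rw [hβgeo _ hvs _ hv]
            have e : |s - (d1 + (t' - t)) - (u - (d1 + (t' - t)))| = u - s := by
              rw [show s - (d1 + (t' - t)) - (u - (d1 + (t' - t))) = s - u by ring, habs2]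
            rw [e]
            exact qg_geo lam eps (u - s) hlam heps (by linarith)
  constructor
  · -- continuity
    have hαcont : ContinuousOn α (Icc 0 d1) := by
      apply LipschitzOnWith.continuousOn (K := 1)
      apply LipschitzOnWith.of_dist_le_mul
      intro x hx y hy
      rw [hαgeo x hx y hy, Real.dist_eq, NNReal.coe_one, one_mul]
    have hβcont : ContinuousOn (fun u => β (u - (d1 + (t' - t))))
        (Icc (d1 + (t' - t)) L) := by
      have hβc : ContinuousOn β (Icc 0 d2) := by
        apply LipschitzOnWith.continuousOn (K := 1)
        apply LipschitzOnWith.of_dist_le_mul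
        intro x hx y hy
        rw [hβgeo x hx y hy, Real.dist_eq, NNReal.coe_one, one_mul]
      apply hβc.comp ((continuous_id.sub continuous_const).continuousOn)
      intro x hx
      simp only [Pi.sub_apply, id_eq]
      exact ⟨by linarith [hx.1], by linarith [hx.2]⟩
    have hmidcont : ContinuousOn (fun u => γ (t + (u - d1)))
        (Icc d1 (d1 + (t' - t))) := by
      apply hcont.comp ((continuous_const.add
        (continuous_id.sub continuous_const)).continuousOn)
      intro x hx
      exact hmemt x hx.1 hx.2
    have hc1 : ContinuousOn η (Icc 0 d1) :=
      hαcont.congr (fun x hx => ev1 x hx.2)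
    have hc2 : ContinuousOn η (Icc d1 (d1 + (t' - t))) :=
      hmidcont.congr (fun x hx => ev2 x hx.1 hx.2)
    have hc3 : ContinuousOn η (Icc (d1 + (t' - t)) L) :=
      hβcont.congr (fun x hx => ev3 x hx.1)
    have hsplit : Icc (0:ℝ) L =
        (Icc 0 d1 ∪ Icc d1 (d1 + (t' - t))) ∪ Icc (d1 + (t' - t)) L := by
      rw [Icc_union_Icc_eq_Icc hd1 (by linarith),
        Icc_union_Icc_eq_Icc (by linarith) (by linarith)]
    rw [hsplit]
    exact contOn_union_closed (by exact (isClosed_Icc.union isClosed_Icc))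
      isClosed_Icc (contOn_union_closed isClosed_Icc isClosed_Icc hc1 hc2) hc3
  · -- quasi-geodesic
    intro s hs u hu
    rcases le_total s u with h | h
    · exact main s hs u hu h
    · obtain ⟨h1, h2⟩ := main u hu s hs h
      rw [dist_comm (η u) (η s), abs_sub_comm u s] at h1 h2
      exact ⟨h1, h2⟩
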